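/- Let P ⊆ ℤⁿ be a subgroup (the group of periodic domains, recorded by multiplicities on the n interior regions) such that every nonzero element of P has both a positive and a negative coordinate. Then there exists a vector a ∈ ℤⁿ with all coordinates positive such that ⟨a, p⟩ = 0 for all p ∈ P. -/

import Mathlib

open Finset

variable {n : ℕ}

/-- The standard dot-product bilinear form on `Fin n → ℚ`. -/
noncomputable def dotB (n : ℕ) : LinearMap.BilinForm ℚ (Fin n → ℚ) :=
  LinearMap.mk₂ ℚ (fun v w => ∑ k, v k * w k)
    (fun a b c => by simp [add_mul, Finset.sum_add_distrib])
    (fun r a c => by simp [Finset.mul_sum, mul_assoc])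
    (fun a b c => by simp [mul_add, Finset.sum_add_distrib])
    (fun r a c => by simp [Finset.mul_sum, mul_left_comm])

lemma dotB_apply (v w : Fin n → ℚ) : dotB n v w = ∑ k, v k * w k := rfl

lemma dotB_comm (v w : Fin n → ℚ) : dotB n v w = dotB n w v := by
  simp [dotB_apply, mul_comm]

lemma dotB_refl : (dotB n).IsRefl := fun v w h => by rwa [dotB_comm]

lemma dotB_single_right (v : Fin n → ℚ) (j : Fin n) :
    dotB n v (Pi.single j 1) = v j := by
  simp [dotB_apply, Pi.single_apply, mul_ite, Finset.sum_ite_eq']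

lemma dotB_single_left (v : Fin n → ℚ) (j : Fin n) :
    dotB n (Pi.single j 1) v = v j := by
  rw [dotB_comm, dotB_single_right]

lemma dotB_nondeg : (dotB n).Nondegenerate := by
  have hL : ∀ v : Fin n → ℚ, (∀ w, dotB n v w = 0) → v = 0 := by
    intro v h
    funext k
    have := h (Pi.single k 1)
    rw [dotB_single_right] at this
    simpa using this
  exact ⟨hL, fun v h => hL v (fun w => by rw [dotB_comm]; exact h w)⟩

/-- Vectors supported on a finset of coordinates. -/
def suppM (n : ℕ) (s : Finset (Fin n)) : Submodule ℚ (Fin n → ℚ) where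
  carrier := {x | ∀ k ∉ s, x k = 0}
  add_mem' := fun hx hy k hk => by simp [hx k hk, hy k hk]
  zero_mem' := fun k _ => rfl
  smul_mem' := fun c x hx k hk => by simp [hx k hk]

lemma mem_suppM {s : Finset (Fin n)} {x : Fin n → ℚ} :
    x ∈ suppM n s ↔ ∀ k ∉ s, x k = 0 := Iff.rfl

lemma suppM_mono {s t : Finset (Fin n)} (h : s ⊆ t) : suppM n s ≤ suppM n t :=
  fun x hx k hk => hx k (fun hks => hk (h hks))

lemma single_mem_suppM {s : Finset (Fin n)} {j : Fin n} (hj : j ∈ s) :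
    Pi.single j (1 : ℚ) ∈ suppM n s := by
  intro k hk
  exact Pi.single_eq_of_ne (fun h : k = j => hk (h ▸ hj)) 1

lemma orth_suppM (s : Finset (Fin n)) :
    (dotB n).orthogonal (suppM n s) = suppM n sᶜ := by
  ext m
  constructor
  · intro h k hk
    have hks : k ∈ s := by simpa using hk
    have := h (Pi.single k 1) (single_mem_suppM hks)
    rwa [dotB_single_left] at this
  · intro hm v hv
    rw [dotB_apply]
    refine Finset.sum_eq_zero (fun k _ => ?_)
    by_cases hks : k ∈ s
    · rw [hm k (by simpa using hks), mul_zero]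
    · rw [hv k hks, zero_mul]

lemma orth_sup (A C : Submodule ℚ (Fin n → ℚ)) :
    (dotB n).orthogonal (A ⊔ C) = (dotB n).orthogonal A ⊓ (dotB n).orthogonal C := by
  refine le_antisymm (le_inf (LinearMap.BilinForm.orthogonal_le le_sup_left)
    (LinearMap.BilinForm.orthogonal_le le_sup_right)) ?_
  rintro m ⟨hmA, hmC⟩ v hv
  obtain ⟨a, ha, c, hc, rfl⟩ := Submodule.mem_sup.mp hv
  have h1 := hmA a ha
  have h2 := hmC c hc
  rw [map_add, LinearMap.add_apply, h1, h2, add_zero]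

lemma orth_inf (A C : Submodule ℚ (Fin n → ℚ)) :
    (dotB n).orthogonal (A ⊓ C) = (dotB n).orthogonal A ⊔ (dotB n).orthogonal C := by
  conv_lhs => rw [← LinearMap.BilinForm.orthogonal_orthogonal dotB_nondeg dotB_refl A,
    ← LinearMap.BilinForm.orthogonal_orthogonal dotB_nondeg dotB_refl C, ← orth_sup,
    LinearMap.BilinForm.orthogonal_orthogonal dotB_nondeg dotB_refl]

lemma sup_compl_inf_supp {V : Submodule ℚ (Fin n → ℚ)} {s : Finset (Fin n)}
    (hV : V ≤ suppM n s) : (V ⊔ suppM n sᶜ) ⊓ suppM n s = V := by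
  ext z
  constructor
  · rintro ⟨hz1, hz2⟩
    obtain ⟨v, hv, c, hc, rfl⟩ := Submodule.mem_sup.mp hz1
    have hcz : c = 0 := by
      funext k
      by_cases hks : k ∈ s
      · exact hc k (by simpa using hks)
      · have h1 : v k = 0 := hV hv k hks
        have h2 : (v + c) k = 0 := hz2 k hks
        simpa [h1] using h2
    simpa [hcz] using hv
  · intro hz
    exact ⟨Submodule.mem_sup_left hz, hV hz⟩

/-- Biduality: the orthogonal of `orthogonal V ⊓ suppM s`, within `suppM s`, is `V`. -/
lemma biduality {V : Submodule ℚ (Fin n → ℚ)} {s : Finset (Fin n)} (hV : V ≤ suppM n s) :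
    (dotB n).orthogonal ((dotB n).orthogonal V ⊓ suppM n s) ⊓ suppM n s = V := by
  rw [orth_inf, LinearMap.BilinForm.orthogonal_orthogonal dotB_nondeg dotB_refl,
    orth_suppM, sup_compl_inf_supp hV]

/-- A linear functional (given by pairing with `y'`) vanishing on `{v ∈ V | v j = 0}`
is a multiple of the `j`-th coordinate on `V`. -/
lemma factA {V : Submodule ℚ (Fin n → ℚ)} {j : Fin n} {y' : Fin n → ℚ}
    (h : ∀ v ∈ V, v j = 0 → dotB n y' v = 0) :
    ∃ μ : ℚ, ∀ v ∈ V, dotB n y' v = μ * v j := by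
  by_cases h0 : ∃ v₀ ∈ V, v₀ j ≠ 0
  · obtain ⟨v₀, hv₀, hj⟩ := h0
    refine ⟨dotB n y' v₀ / v₀ j, fun v hv => ?_⟩
    have hmem : v - (v j / v₀ j) • v₀ ∈ V := sub_mem hv (Submodule.smul_mem _ _ hv₀)
    have hz : (v - (v j / v₀ j) • v₀) j = 0 := by
      simp only [Pi.sub_apply, Pi.smul_apply, smul_eq_mul]
      field_simp
      ring
    have hvanish := h _ hmem hz
    rw [map_sub, map_smul, smul_eq_mul, sub_eq_zero] at hvanish
    rw [hvanish]
    field_simp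
  · push_neg at h0
    exact ⟨0, fun v hv => by rw [h v hv (h0 v hv), zero_mul]⟩

lemma mem_supp_erase {s : Finset (Fin n)} {j : Fin n} {v : Fin n → ℚ}
    (hv : v ∈ suppM n s) (hvj : v j = 0) : v ∈ suppM n (s.erase j) := by
  intro k hk
  by_cases hkj : k = j
  · exact hkj ▸ hvj
  · exact hv k (fun hks => hk (Finset.mem_erase.mpr ⟨hkj, hks⟩))

/-- Lifting an orthogonal vector from `s.erase j` back to `s`. -/
lemma lift_orth {V : Submodule ℚ (Fin n → ℚ)} {s : Finset (Fin n)} {j : Fin n}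
    (hVs : V ≤ suppM n s) (hj : j ∈ s) {y' : Fin n → ℚ}
    (hy' : y' ∈ (dotB n).orthogonal (V ⊓ suppM n (s.erase j)) ⊓ suppM n (s.erase j)) :
    ∃ μ : ℚ, (y' - μ • (Pi.single j 1 : Fin n → ℚ)) ∈ (dotB n).orthogonal V ⊓ suppM n s ∧
      (y' - μ • (Pi.single j 1 : Fin n → ℚ)) j = -μ ∧ ∀ k, k ≠ j → (y' - μ • (Pi.single j 1 : Fin n → ℚ)) k = y' k := by
  obtain ⟨hy'o, hy's⟩ := hy'
  have h : ∀ v ∈ V, v j = 0 → dotB n y' v = 0 := by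
    intro v hv hvj
    rw [dotB_comm]
    exact hy'o v ⟨hv, mem_supp_erase (hVs hv) hvj⟩
  obtain ⟨μ, hμ⟩ := factA h
  refine ⟨μ, ⟨?_, ?_⟩, ?_, ?_⟩
  · intro v hv
    rw [map_sub, map_smul, smul_eq_mul, dotB_single_right,
      dotB_comm, hμ v hv, sub_self]
  · intro k hk
    have hkj : k ≠ j := fun h => hk (h ▸ hj)
    have h1 : y' k = 0 := hy's k (fun hke => hk (Finset.mem_of_mem_erase hke))
    simp [h1, Pi.single_eq_of_ne hkj]
  · have h1 : y' j = 0 := hy's j (Finset.notMem_erase j s)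
    simp [h1]
  · intro k hk
    simp [Pi.single_eq_of_ne hk]

/-- The key per-coordinate Tucker-type alternative, by induction on the support. -/
lemma keyL (s : Finset (Fin n)) :
    ∀ V : Submodule ℚ (Fin n → ℚ), V ≤ suppM n s → ∀ i ∈ s,
      ∃ x ∈ V, ∃ y ∈ (dotB n).orthogonal V ⊓ suppM n s,
        (∀ k, 0 ≤ x k) ∧ (∀ k, 0 ≤ y k) ∧ 0 < x i + y i := by
  induction s using Finset.strongInduction with
  | _ s ih =>
  intro V hVs i hi
  by_cases hej : ∃ j ∈ s, j ≠ i
  · obtain ⟨j, hjs, hji⟩ := hej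
    have hss : s.erase j ⊂ s := Finset.erase_ssubset hjs
    have his' : i ∈ s.erase j := Finset.mem_erase.mpr ⟨hji.symm, hi⟩
    -- primal application of the inductive hypothesis
    obtain ⟨x', hx'V, y', hy'mem, hx'pos, hy'pos, hxy'⟩ :=
      ih _ hss (V ⊓ suppM n (s.erase j)) inf_le_right i his'
    by_cases hxi : 0 < x' i
    · exact ⟨x', hx'V.1, 0, Submodule.zero_mem _, hx'pos, fun k => le_refl 0, by simpa using hxi⟩
    have hy'i : 0 < y' i := by
      have := hx'pos i
      rcases lt_or_eq_of_le this with h | h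
      · exact absurd h hxi
      · simpa [← h] using hxy'
    obtain ⟨μ, hymem, hyj, hyk⟩ := lift_orth hVs hjs hy'mem
    set y : Fin n → ℚ := y' - μ • (Pi.single j 1 : Fin n → ℚ) with hy
    by_cases hμ : μ ≤ 0
    · refine ⟨0, Submodule.zero_mem _, y, hymem, fun k => le_refl 0, ?_, ?_⟩
      · intro k
        by_cases hkj : k = j
        · rw [hkj, hyj]; linarith
        · rw [hyk k hkj]; exact hy'pos k
      · rw [hyk i hji.symm]; simpa using hy'i
    push_neg at hμ
    -- dual application of the inductive hypothesis
    set W : Submodule ℚ (Fin n → ℚ) := (dotB n).orthogonal V ⊓ suppM n s with hW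
    obtain ⟨u, huW, w, hwmem, hupos, hwpos, huw⟩ :=
      ih _ hss (W ⊓ suppM n (s.erase j)) inf_le_right i his'
    by_cases hui : 0 < u i
    · exact ⟨0, Submodule.zero_mem _, u, huW.1, fun k => le_refl 0, hupos, by simpa using hui⟩
    have hwi : 0 < w i := by
      have := hupos i
      rcases lt_or_eq_of_le this with h | h
      · exact absurd h hui
      · simpa [← h] using huw
    obtain ⟨ν, hxhmem, hxhj, hxhk⟩ := lift_orth (inf_le_right : W ≤ suppM n s) hjs hwmem
    set xh : Fin n → ℚ := w - ν • (Pi.single j 1 : Fin n → ℚ) with hxh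
    have hxhV : xh ∈ V := by
      have := biduality hVs
      rw [← this]
      exact hxhmem
    by_cases hν : ν ≤ 0
    · refine ⟨xh, hxhV, 0, Submodule.zero_mem _, ?_, fun k => le_refl 0, ?_⟩
      · intro k
        by_cases hkj : k = j
        · rw [hkj, hxhj]; linarith
        · rw [hxhk k hkj]; exact hwpos k
      · rw [hxhk i hji.symm]; simpa using hwi
    push_neg at hν
    -- contradiction: ⟪xh, y⟫ = 0 but it is strictly positive
    exfalso
    have horth : dotB n xh y = 0 := hymem.1 xh hxhV
    rw [dotB_apply] at horth
    have hsplit : ∑ k, xh k * y k =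
        xh j * y j + ∑ k ∈ Finset.univ.erase j, xh k * y k :=
      (Finset.add_sum_erase _ (fun k => xh k * y k) (Finset.mem_univ j)).symm
    have hterm : ∀ k ∈ Finset.univ.erase j, 0 ≤ xh k * y k := by
      intro k hk
      have hkj : k ≠ j := (Finset.mem_erase.mp hk).1
      rw [hxhk k hkj, hyk k hkj]
      exact mul_nonneg (hwpos k) (hy'pos k)
    have hjj : 0 < xh j * y j := by
      rw [hxhj, hyj, neg_mul_neg]
      exact mul_pos hν hμ
    have : 0 < ∑ k, xh k * y k := by
      rw [hsplit]
      have := Finset.sum_nonneg hterm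
      linarith
    linarith [horth ▸ this]
  · -- base case : every element of s equals i
    push_neg at hej
    by_cases hv : ∃ v ∈ V, v i ≠ 0
    · obtain ⟨v, hvV, hvi⟩ := hv
      refine ⟨(v i)⁻¹ • v, Submodule.smul_mem _ _ hvV, 0, Submodule.zero_mem _, ?_, fun k => le_refl 0, ?_⟩
      · intro k
        by_cases hki : k = i
        · simp [hki, inv_mul_cancel₀ hvi]
        · have : v k = 0 := by
            refine hVs hvV k (fun hks => hki ?_)
            exact hej k hks
          simp [this]
      · simp [inv_mul_cancel₀ hvi]
    · push_neg at hv
      refine ⟨0, Submodule.zero_mem _, Pi.single i 1, ⟨?_, single_mem_suppM hi⟩, fun k => le_refl 0, ?_, ?_⟩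
      · intro v hvV
        rw [dotB_single_right]
        exact hv v hvV
      · intro k
        by_cases hki : k = i
        · subst hki; simp
        · simp [Pi.single_eq_of_ne hki]
      · simp

/-- Stiemke's lemma over `ℚ`: a subspace containing no nonzero nonnegative vector
has a strictly positive orthogonal vector. -/
lemma stiemkeQ (V : Submodule ℚ (Fin n → ℚ))
    (hV : ∀ v ∈ V, (∀ k, 0 ≤ v k) → v = 0) :
    ∃ Y : Fin n → ℚ, (∀ i, 0 < Y i) ∧ ∀ v ∈ V, ∑ k, Y k * v k = 0 := by
  have hle : V ≤ suppM n Finset.univ := fun v _ k hk => absurd (Finset.mem_univ k) hk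
  choose x hxV y hyV hxpos hypos hxy using
    fun i => keyL Finset.univ V hle i (Finset.mem_univ i)
  have hX0 : (∑ i, x i) = 0 :=
    hV _ (Submodule.sum_mem _ (fun i _ => hxV i))
      (fun k => by
        rw [Finset.sum_apply]
        exact Finset.sum_nonneg (fun i _ => hxpos i k))
  have hx0 : ∀ i, x i i = 0 := by
    intro i
    have hco : ∑ i', x i' i = 0 := by
      have := congrFun hX0 i
      simpa [Finset.sum_apply] using this
    exact (Finset.sum_eq_zero_iff_of_nonneg (fun i' _ => hxpos i' i)).mp hco i (Finset.mem_univ i)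
  refine ⟨fun k => ∑ i, y i k, ?_, ?_⟩
  · intro k
    refine Finset.sum_pos' (fun i _ => hypos i k) ⟨k, Finset.mem_univ k, ?_⟩
    have := hxy k
    rw [hx0 k] at this
    simpa using this
  · intro v hv
    have hterm : ∀ i, ∑ k, y i k * v k = 0 := by
      intro i
      have := (hyV i).1 v hv
      rw [dotB_comm, dotB_apply] at this
      exact this
    calc ∑ k, (∑ i, y i k) * v k = ∑ k, ∑ i, y i k * v k := by
          simp [Finset.sum_mul]
      _ = ∑ i, ∑ k, y i k * v k := Finset.sum_comm
      _ = 0 := by simp [hterm]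

/-- Clearing denominators: if `q.den ∣ m` then `q * m` is an integer. -/
lemma den_clear (q : ℚ) (m : ℕ) (h : q.den ∣ m) : ∃ c : ℤ, (c : ℚ) = q * m := by
  refine ⟨q.num * ((m / q.den : ℕ) : ℤ), ?_⟩
  have hden : ((q.den : ℚ)) ≠ 0 := by positivity
  have h1 : (q.num : ℚ) = q * q.den := (div_eq_iff hden).mp (Rat.num_div_den q)
  have h2 : ((q.den : ℚ)) * ((m / q.den : ℕ) : ℚ) = (m : ℚ) := by
    rw [← Nat.cast_mul, Nat.mul_div_cancel' h]
  calc ((q.num * ((m / q.den : ℕ) : ℤ) : ℤ) : ℚ)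
      = (q.num : ℚ) * ((m / q.den : ℕ) : ℚ) := by
        rw [Int.cast_mul, Int.cast_natCast]
    _ = q * ((q.den : ℚ) * ((m / q.den : ℕ) : ℚ)) := by rw [h1]; ring
    _ = q * m := by rw [h2]

/-- Integer area assignment: if every nonzero element of a subgroup
`P ⊆ ℤⁿ` has both a positive and a negative coordinate, then there is a
vector with all positive integer coordinates orthogonal to all of `P`. -/
theorem exists_positive_integer_area
    (n : ℕ) (P : AddSubgroup (Fin n → ℤ))
    (hP : ∀ p ∈ P, p ≠ 0 → (∃ i, 0 < p i) ∧ (∃ j, p j < 0)) :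
    ∃ a : Fin n → ℤ, (∀ i, 0 < a i) ∧ ∀ p ∈ P, ∑ i, a i * p i = 0 := by
  classical
  set Pc : Set (Fin n → ℚ) := (fun (p : Fin n → ℤ) (i : Fin n) => (p i : ℚ)) '' P with hPc
  set V : Submodule ℚ (Fin n → ℚ) := Submodule.span ℚ Pc with hVdef
  -- V contains no nonzero nonnegative vector
  have hVpos : ∀ v ∈ V, (∀ k, 0 ≤ v k) → v = 0 := by
    intro v hv hvpos
    rw [hVdef, Submodule.mem_span_set'] at hv
    obtain ⟨m, f, g, hsum⟩ := hv
    have hg : ∀ t, ∃ p, p ∈ P ∧ (fun i => ((p i : ℚ))) = (g t : Fin n → ℚ) := by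
      intro t
      obtain ⟨p, hp1, hp2⟩ := (g t).2
      exact ⟨p, hp1, hp2⟩
    choose pt hptP hpt using hg
    set N : ℕ := ∏ t, (f t).den with hN
    have hNpos : 0 < N := Finset.prod_pos (fun t _ => (f t).den_pos)
    have hdvd : ∀ t, (f t).den ∣ N := fun t => Finset.dvd_prod_of_mem _ (Finset.mem_univ t)
    choose c hc using fun t => den_clear (f t) N (hdvd t)
    set p : Fin n → ℤ := ∑ t, c t • pt t with hp
    have hpP : p ∈ P := AddSubgroup.sum_mem _ (fun t _ => AddSubgroup.zsmul_mem _ (hptP t) (c t))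
    have hcast : ∀ i, (p i : ℚ) = N * v i := by
      intro i
      have hvi : ∑ t, f t * (g t : Fin n → ℚ) i = v i := by
        have := congrFun hsum i
        simpa [Finset.sum_apply] using this
      have hgi : ∀ t, ((pt t i : ℚ)) = (g t : Fin n → ℚ) i := fun t => congrFun (hpt t) i
      have : (p i : ℚ) = ∑ t, (c t : ℚ) * (pt t i : ℚ) := by
        rw [hp]
        push_cast [Finset.sum_apply]
        refine Finset.sum_congr rfl (fun t _ => ?_)
        push_cast [Pi.smul_apply, smul_eq_mul]
        ring
      rw [this]
      calc ∑ t, (c t : ℚ) * (pt t i : ℚ)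
          = ∑ t, (f t * N) * (g t : Fin n → ℚ) i := by
            refine Finset.sum_congr rfl (fun t _ => ?_)
            rw [hc t, hgi t]
        _ = N * ∑ t, f t * (g t : Fin n → ℚ) i := by
            rw [Finset.mul_sum]
            exact Finset.sum_congr rfl (fun t _ => by ring)
        _ = N * v i := by rw [hvi]
    have hpnonneg : ∀ i, 0 ≤ p i := by
      intro i
      have : (0 : ℚ) ≤ (p i : ℚ) := by
        rw [hcast i]
        exact mul_nonneg (by positivity) (hvpos i)
      exact_mod_cast this
    have hp0 : p = 0 := by
      by_contra hne
      obtain ⟨_, ⟨j, hj⟩⟩ := hP p hpP hne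
      exact absurd (hpnonneg j) (not_le.mpr hj)
    funext i
    have : (p i : ℚ) = 0 := by rw [hp0]; simp
    rw [hcast i] at this
    have hNne : ((N : ℚ)) ≠ 0 := by positivity
    simpa [hNne] using this
  obtain ⟨Y, hYpos, hYorth⟩ := stiemkeQ V hVpos
  set M : ℕ := ∏ i, (Y i).den with hM
  have hMpos : 0 < M := Finset.prod_pos (fun i _ => (Y i).den_pos)
  choose a ha using fun i => den_clear (Y i) M (Finset.dvd_prod_of_mem _ (Finset.mem_univ i))
  refine ⟨a, ?_, ?_⟩
  · intro i
    have : (0 : ℚ) < (a i : ℚ) := by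
      rw [ha i]
      exact mul_pos (hYpos i) (by exact_mod_cast hMpos)
    exact_mod_cast this
  · intro p hp
    have hpV : (fun i => ((p i : ℚ))) ∈ V :=
      Submodule.subset_span ⟨p, hp, rfl⟩
    have horth := hYorth _ hpV
    have : ((∑ i, a i * p i : ℤ) : ℚ) = 0 := by
      push_cast
      calc ∑ i, (a i : ℚ) * (p i : ℚ)
          = ∑ i, (Y i * M) * (p i : ℚ) := by
            exact Finset.sum_congr rfl (fun i _ => by rw [ha i])
        _ = M * ∑ i, Y i * (p i : ℚ) := by
            rw [Finset.mul_sum]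
            exact Finset.sum_congr rfl (fun i _ => by ring)
        _ = 0 := by rw [horth, mul_zero]
    exact_mod_cast this
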